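/- arXiv:1604.02678 — 2 statements merged into one kernel-verified Lean document; each statement's English description precedes it below -/
import Mathlib

section
/- Let f : X → X be a homeomorphism of a locally compact separable metric space (X, d), where d is the restriction of a metric on the one-point compactification X̃. If f is expansive, then f has a generator. -/
section

variable {X : Type*} [MetricSpace X]

/-- `e` (a homeomorphism) is expansive: there is `δ > 0` such that distinct points
are separated by more than `δ` under some iterate `f^n`, `n ∈ ℤ`. -/
def IsExpansiveHomeo (e : X ≃ X) : Prop :=
  ∃ δ : ℝ, 0 < δ ∧ ∀ x y : X, x ≠ y → ∃ n : ℤ, δ < dist ((e ^ n) x) ((e ^ n) y)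

/-- `e` has a generator: a finite cover of `X` by admissible open sets (closure or
complement compact) such that `⋂ n : ℤ, f⁻ⁿ(cl (α (A n)))` has at most one point
for every bisequence `A` from the cover. -/
def HasGenerator (e : X ≃ X) : Prop :=
  ∃ (k : ℕ) (α : Fin k → Set X),
    ((∀ i, IsOpen (α i)) ∧ (∀ i, IsCompact (closure (α i)) ∨ IsCompact (α i)ᶜ) ∧
      (⋃ i, α i) = Set.univ) ∧
    ∀ A : ℤ → Fin k, (⋂ n : ℤ, (⇑(e ^ n)) ⁻¹' closure (α (A n))).Subsingleton

/-- Let `f : X → X` be a homeomorphism of a locally compact separable metric space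
`(X, d)`, where `d` is the restriction of a metric on the one-point
compactification `X̃`. If `f` is expansive then `f` has a generator. -/
theorem hasGenerator_of_expansive
    [LocallyCompactSpace X] [TopologicalSpace.SeparableSpace X]
    (m : MetricSpace (OnePoint X))
    (hcompat : m.toUniformSpace.toTopologicalSpace =
      (inferInstance : TopologicalSpace (OnePoint X)))
    (hrestrict : ∀ x y : X,
      @dist _ m.toPseudoMetricSpace.toDist (x : OnePoint X) (y : OnePoint X) = dist x y)
    (e : X ≃ X) (hc : Continuous e) (hc' : Continuous e.symm)
    (hexp : IsExpansiveHomeo e) :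
    HasGenerator e := by
  classical
  obtain ⟨δ, hδ, hexp⟩ := hexp
  open OnePoint Topology in
  -- metric notions on the one-point compactification, w.r.t. `m`
  set B : OnePoint X → ℝ → Set (OnePoint X) := @Metric.ball _ m.toPseudoMetricSpace with hB
  set CB : OnePoint X → ℝ → Set (OnePoint X) :=
    @Metric.closedBall _ m.toPseudoMetricSpace with hCB
  set D : OnePoint X → OnePoint X → ℝ := @dist _ m.toPseudoMetricSpace.toDist with hD
  have hBmem : ∀ (c y : OnePoint X) (ρ : ℝ), y ∈ B c ρ ↔ D y c < ρ := by
    intro c y ρ; exact @Metric.mem_ball _ m.toPseudoMetricSpace _ _ _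
  have hCBmem : ∀ (c y : OnePoint X) (ρ : ℝ), y ∈ CB c ρ ↔ D y c ≤ ρ := by
    intro c y ρ; exact @Metric.mem_closedBall _ m.toPseudoMetricSpace _ _ _
  have hDcomm : ∀ y z : OnePoint X, D y z = D z y := fun y z =>
    @dist_comm _ m.toPseudoMetricSpace _ _
  have hDtri : ∀ a b c : OnePoint X, D a c ≤ D a b + D b c := fun a b c =>
    @dist_triangle _ m.toPseudoMetricSpace _ _ _
  have hDself : ∀ y : OnePoint X, D y y = 0 := fun y =>
    @dist_self _ m.toPseudoMetricSpace _
  -- transfer topological facts about `m` to the canonical topology of `OnePoint X`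
  have hBopen : ∀ (c : OnePoint X) (ρ : ℝ), IsOpen (B c ρ) := by
    intro c ρ
    have h := @Metric.isOpen_ball _ m.toPseudoMetricSpace c ρ
    rwa [hcompat] at h
  have hBclosure : ∀ (c : OnePoint X) (ρ : ℝ), closure (B c ρ) ⊆ CB c ρ := by
    intro c ρ
    have h := @Metric.closure_ball_subset_closedBall _ m.toPseudoMetricSpace c ρ
    rwa [hcompat] at h
  have hBnhds : ∀ (c : OnePoint X) (ρ : ℝ), 0 < ρ → B c ρ ∈ 𝓝 c := by
    intro c ρ hρ
    have h := @Metric.ball_mem_nhds _ m.toPseudoMetricSpace c ρ hρ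
    rwa [hcompat] at h
  have hemb : Topology.IsEmbedding ((↑) : X → OnePoint X) :=
    OnePoint.isOpenEmbedding_coe.isEmbedding
  have hcont : Continuous ((↑) : X → OnePoint X) := OnePoint.continuous_coe
  -- key diameter bound for preimages of balls
  have hbound : ∀ (c : OnePoint X) (ρ : ℝ) (p q : X),
      p ∈ closure (((↑) : X → OnePoint X) ⁻¹' B c ρ) →
      q ∈ closure (((↑) : X → OnePoint X) ⁻¹' B c ρ) → dist p q ≤ 2 * ρ := by
    intro c ρ p q hp hq
    have hsub : closure (((↑) : X → OnePoint X) ⁻¹' B c ρ)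
        ⊆ ((↑) : X → OnePoint X) ⁻¹' CB c ρ :=
      (hcont.closure_preimage_subset _).trans (Set.preimage_mono (hBclosure c ρ))
    have hp' : D (p : OnePoint X) c ≤ ρ := (hCBmem _ _ _).1 (hsub hp)
    have hq' : D (q : OnePoint X) c ≤ ρ := (hCBmem _ _ _).1 (hsub hq)
    have : D (p : OnePoint X) (q : OnePoint X) ≤ 2 * ρ := by
      calc D (p : OnePoint X) q ≤ D (p : OnePoint X) c + D c q := hDtri _ _ _
        _ ≤ ρ + ρ := add_le_add hp' (by rw [hDcomm]; exact hq')
        _ = 2 * ρ := by ring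
    rw [← hrestrict p q]; exact this
  -- compactness of closures of preimages of balls avoiding ∞
  have hclos : ∀ (c : OnePoint X) (ρ : ℝ), (∞ : OnePoint X) ∉ CB c ρ →
      IsCompact (closure (((↑) : X → OnePoint X) ⁻¹' B c ρ)) := by
    intro c ρ hinf
    rw [hemb.closure_eq_preimage_closure_image]
    set C := closure (((↑) : X → OnePoint X) '' (((↑) : X → OnePoint X) ⁻¹' B c ρ)) with hC
    have hCsub : C ⊆ CB c ρ :=
      (closure_mono (Set.image_preimage_subset _ _)).trans (hBclosure c ρ)
    have hCc : IsCompact C := isClosed_closure.isCompact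
    have hCr : C ⊆ Set.range ((↑) : X → OnePoint X) := by
      intro y hy
      rcases OnePoint.ne_infty_iff_exists.1 (fun h => hinf (h ▸ hCsub hy)) with ⟨x, hx⟩
      exact ⟨x, hx⟩
    rw [hemb.isCompact_iff, Set.image_preimage_eq_of_subset hCr]
    exact hCc
  -- finite net covering the complement of a small ball around ∞
  have hKclosed : IsClosed ((B (∞ : OnePoint X) (δ / 8))ᶜ) := (hBopen _ _).isClosed_compl
  obtain ⟨t, htK, hcover⟩ :=
    hKclosed.isCompact.elim_nhds_subcover (fun y => B y (δ / 16))
      (fun y _ => hBnhds y (δ / 16) (by positivity))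
  set l : List (OnePoint X) := t.toList with hl
  have hlK : ∀ i : Fin l.length, l.get i ∈ (B (∞ : OnePoint X) (δ / 8))ᶜ := by
    intro i
    exact htK _ (by rw [← Finset.mem_toList]; exact l.get_mem i)
  -- the candidate generator
  set α : Fin (l.length + 1) → Set X :=
    Fin.cons (((↑) : X → OnePoint X) ⁻¹' B ∞ (δ / 4))
      (fun i => ((↑) : X → OnePoint X) ⁻¹' B (l.get i) (δ / 16)) with hα
  -- each α j is a preimage of a ball of radius ≤ δ/4
  have hαform : ∀ j : Fin (l.length + 1), ∃ (c : OnePoint X) (ρ : ℝ),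
      ρ ≤ δ / 4 ∧ α j = ((↑) : X → OnePoint X) ⁻¹' B c ρ := by
    intro j
    refine Fin.cases ?_ ?_ j
    · exact ⟨∞, δ / 4, le_refl _, by simp [hα]⟩
    · intro i
      exact ⟨l.get i, δ / 16, by linarith, by simp [hα]⟩
  refine ⟨l.length + 1, α, ⟨?_, ?_, ?_⟩, ?_⟩
  · -- openness
    intro j
    obtain ⟨c, ρ, -, hj⟩ := hαform j
    rw [hj]
    exact (hBopen c ρ).preimage hcont
  · -- admissibility
    intro j
    refine Fin.cases ?_ ?_ j
    · -- the set around ∞ : compact complement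
      right
      rw [hα, Fin.cons_zero, ← Set.preimage_compl]
      have hCc : IsCompact ((B (∞ : OnePoint X) (δ / 4))ᶜ) :=
        ((hBopen _ _).isClosed_compl).isCompact
      have hCr : (B (∞ : OnePoint X) (δ / 4))ᶜ ⊆ Set.range ((↑) : X → OnePoint X) := by
        intro y hy
        have hy' : y ≠ ∞ := by
          intro h
          apply hy
          rw [h, hBmem, hDself]
          positivity
        rcases OnePoint.ne_infty_iff_exists.1 hy' with ⟨x, hx⟩
        exact ⟨x, hx⟩
      rw [hemb.isCompact_iff, Set.image_preimage_eq_of_subset hCr]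
      exact hCc
    · -- balls far from ∞ : compact closure
      intro i
      left
      rw [hα, Fin.cons_succ]
      refine hclos _ _ ?_
      intro hmem
      have h1 : D (∞ : OnePoint X) (l.get i) ≤ δ / 16 := (hCBmem _ _ _).1 hmem
      have h2 : ¬ D (l.get i) (∞ : OnePoint X) < δ / 8 := by
        have := hlK i
        rw [Set.mem_compl_iff, hBmem] at this
        exact this
      rw [hDcomm] at h1
      apply h2
      linarith
  · -- covering
    rw [Set.eq_univ_iff_forall]
    intro z
    by_cases hz : D (z : OnePoint X) (∞ : OnePoint X) < δ / 4
    · exact Set.mem_iUnion.2 ⟨0, by rw [hα]; simpa [Fin.cons_zero, hBmem] using hz⟩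
    · have hzK : (z : OnePoint X) ∈ (B (∞ : OnePoint X) (δ / 8))ᶜ := by
        rw [Set.mem_compl_iff, hBmem]
        intro h
        exact hz (by linarith)
      obtain ⟨y, hy⟩ := Set.mem_iUnion.1 (hcover hzK)
      obtain ⟨hyt, hzy⟩ := Set.mem_iUnion.1 hy
      have : y ∈ l := by rw [hl, Finset.mem_toList]; exact hyt
      obtain ⟨i, hi⟩ := List.mem_iff_get.1 this
      refine Set.mem_iUnion.2 ⟨i.succ, ?_⟩
      rw [hα]
      simp only [Fin.cons_succ]
      rw [Set.mem_preimage, hi]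
      exact hzy
  · -- generator property
    intro A x hx y hy
    by_contra hxy
    obtain ⟨n, hn⟩ := hexp x y hxy
    have hxn : (e ^ n) x ∈ closure (α (A n)) := by
      have := Set.mem_iInter.1 hx n; exact this
    have hyn : (e ^ n) y ∈ closure (α (A n)) := by
      have := Set.mem_iInter.1 hy n; exact this
    obtain ⟨c, ρ, hρ, hj⟩ := hαform (A n)
    rw [hj] at hxn hyn
    have hle : dist ((e ^ n) x) ((e ^ n) y) ≤ 2 * ρ := hbound c ρ _ _ hxn hyn
    linarith

end
end

section
/- Let f : X → X be a homeomorphism of a locally compact separable metric space (X, d), where d is the restriction of a metric on the one-point compactification X̃. If f has a generator, then f is expansive. -/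
section

variable {X : Type*} [MetricSpace X]

/-- Let `f : X → X` be a homeomorphism of a locally compact separable metric space
`(X, d)`, where `d` is the restriction of a metric on the one-point
compactification `X̃`. If `f` has a generator then `f` is expansive. -/
theorem expansive_of_hasGenerator
    [LocallyCompactSpace X] [TopologicalSpace.SeparableSpace X]
    (m : MetricSpace (OnePoint X))
    (hcompat : m.toUniformSpace.toTopologicalSpace =
      (inferInstance : TopologicalSpace (OnePoint X)))
    (hrestrict : ∀ x y : X,
      @dist _ m.toPseudoMetricSpace.toDist (x : OnePoint X) (y : OnePoint X) = dist x y)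
    (e : X ≃ X) (hc : Continuous e) (hc' : Continuous e.symm)
    (hgen : HasGenerator e) :
    IsExpansiveHomeo e := by
  classical
  rcases isEmpty_or_nonempty X with hX | hX
  · exact ⟨1, one_pos, fun x => (IsEmpty.false x).elim⟩
  obtain ⟨k, α, ⟨hopen, hadm, hcover⟩, hgen⟩ := hgen
  -- the extended cover of OnePoint X
  set B : Fin k → Set (OnePoint X) := fun i =>
    if IsCompact (α i)ᶜ then ((↑) '' (α i)ᶜ)ᶜ else (↑) '' α i with hB
  have hmemB : ∀ (i : Fin k) (a : X), (a : OnePoint X) ∈ B i → a ∈ α i := by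
    intro i a ha
    simp only [hB] at ha
    split_ifs at ha with h
    · by_contra hna
      exact ha (Set.mem_image_of_mem _ hna)
    · obtain ⟨b, hb, hba⟩ := ha
      rwa [OnePoint.coe_injective hba] at hb
  have hmemB' : ∀ (i : Fin k) (a : X), a ∈ α i → (a : OnePoint X) ∈ B i := by
    intro i a ha
    simp only [hB]
    split_ifs with h
    · rintro ⟨b, hb, hba⟩
      rw [OnePoint.coe_injective hba] at hb
      exact hb ha
    · exact Set.mem_image_of_mem _ ha
  have hopenB : ∀ i, IsOpen (B i) := by
    intro i
    simp only [hB]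
    split_ifs with h
    · exact OnePoint.isOpen_compl_image_coe.2 ⟨(hopen i).isClosed_compl, h⟩
    · exact OnePoint.isOpen_image_coe.2 (hopen i)
  -- some member of the cover has compact complement
  obtain ⟨x0⟩ := hX
  have hx0 : x0 ∈ ⋃ i, α i := hcover ▸ Set.mem_univ x0
  obtain ⟨i0, hi0⟩ := Set.mem_iUnion.mp hx0
  have hinf : ∃ i, IsCompact (α i)ᶜ := by
    by_cases hall : ∀ i, IsCompact (closure (α i))
    · have hXc : IsCompact (Set.univ : Set X) := by
        have : (Set.univ : Set X) ⊆ ⋃ i, closure (α i) := by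
          rw [← hcover]; exact Set.iUnion_mono fun i => subset_closure
        exact (isCompact_iUnion hall).of_isClosed_subset isClosed_univ this
      have : CompactSpace X := isCompact_univ_iff.mp hXc
      exact ⟨i0, (hopen i0).isClosed_compl.isCompact⟩
    · push_neg at hall
      obtain ⟨i, hi⟩ := hall
      exact ⟨i, (hadm i).resolve_left hi⟩
  have hcoverB : (Set.univ : Set (OnePoint X)) ⊆ ⋃ i, B i := by
    intro z _
    induction z using OnePoint.rec with
    | infty =>
      obtain ⟨i, hi⟩ := hinf
      refine Set.mem_iUnion.2 ⟨i, ?_⟩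
      simp only [hB, if_pos hi]
      exact fun h => OnePoint.infty_notMem_image_coe h
    | coe a =>
      have : a ∈ ⋃ i, α i := hcover ▸ Set.mem_univ a
      obtain ⟨i, hi⟩ := Set.mem_iUnion.mp this
      exact Set.mem_iUnion.2 ⟨i, hmemB' i a hi⟩
  -- transfer to the topology of m
  have hopenB' : ∀ i, @IsOpen _ m.toUniformSpace.toTopologicalSpace (B i) := by
    intro i; rw [hcompat]; exact hopenB i
  have hcompact : @IsCompact _ m.toUniformSpace.toTopologicalSpace (Set.univ : Set (OnePoint X)) := by
    rw [hcompat]; exact isCompact_univ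
  obtain ⟨δ, hδ, H⟩ :=
    @lebesgue_number_lemma_of_metric (OnePoint X) m.toPseudoMetricSpace Set.univ (Fin k) B
      hcompact hopenB' hcoverB
  refine ⟨δ / 2, by linarith, fun x y hxy => ?_⟩
  by_contra hcon
  push_neg at hcon
  -- choose for each n a common cover member
  have hget : ∀ n : ℤ, ∃ i, (e ^ n) x ∈ α i ∧ (e ^ n) y ∈ α i := by
    intro n
    obtain ⟨i, hi⟩ := H ((e ^ n) x : OnePoint X) (Set.mem_univ _)
    refine ⟨i, hmemB i _ (hi ?_), hmemB i _ (hi ?_)⟩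
    · show @dist _ m.toPseudoMetricSpace.toDist _ _ < δ
      rw [@dist_self _ m.toPseudoMetricSpace]; exact hδ
    · show @dist _ m.toPseudoMetricSpace.toDist _ _ < δ
      rw [hrestrict, dist_comm]
      have := hcon n
      linarith
  choose A hA1 hA2 using hget
  have hx : x ∈ ⋂ n : ℤ, (⇑(e ^ n)) ⁻¹' closure (α (A n)) :=
    Set.mem_iInter.2 fun n => subset_closure (hA1 n)
  have hy : y ∈ ⋂ n : ℤ, (⇑(e ^ n)) ⁻¹' closure (α (A n)) :=
    Set.mem_iInter.2 fun n => subset_closure (hA2 n)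
  exact hxy (hgen A hx hy)


end
end
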